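/- Fix three linearly independent polynomials $f,g,h\in S_1\oplus S_2$. Then for almost every $\xi\in\mathbb{R}^2$, the subspace $\pi_{1,2}P_\xi(S_3)+\mathrm{span}(f,g,h)$ of the five-dimensional space $S_1\oplus S_2$ has dimension $5$, i.e. equals $S_1\oplus S_2$. -/

import Mathlib

open Matrix

/-- The linear map `π_{1,2} ∘ P_ξ` at `ξ = (a,b)`, acting on polynomials of degree ≤ 3
with zero constant term, written in the monomial basis `r, s, r², rs, s², r³, r²s, rs², s³`
of the domain and `r, s, r², rs, s²` of the codomain. -/
noncomputable def Lmat (a b : ℝ) : Matrix (Fin 5) (Fin 9) ℝ :=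
  !![1,0,0,0,0,-3*a^2,-2*a*b,-b^2,0;
     0,1,0,0,0,0,-a^2,-2*a*b,-3*b^2;
     0,0,1,0,0,3*a,b,0,0;
     0,0,0,1,0,0,2*a,2*b,0;
     0,0,0,0,1,0,0,a,3*b]

noncomputable def Lmap (a b : ℝ) : (Fin 9 → ℝ) →ₗ[ℝ] (Fin 5 → ℝ) :=
  (Lmat a b).mulVecLin

/-- `S₃` = span of `r³, r²s, rs², s³`. -/
noncomputable def S₃ : Submodule ℝ (Fin 9 → ℝ) :=
  Submodule.span ℝ {Pi.single (5 : Fin 9) 1, Pi.single 6 1, Pi.single 7 1, Pi.single 8 1}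

@[simp] lemma cons_val_five {α : Type*} {m : ℕ} (x : α) (u : Fin (m+5) → α) :
    vecCons x u 5 = vecHead (vecTail (vecTail (vecTail (vecTail u)))) := rfl
@[simp] lemma cons_val_six {α : Type*} {m : ℕ} (x : α) (u : Fin (m+6) → α) :
    vecCons x u 6 = vecHead (vecTail (vecTail (vecTail (vecTail (vecTail u))))) := rfl
@[simp] lemma cons_val_seven {α : Type*} {m : ℕ} (x : α) (u : Fin (m+7) → α) :
    vecCons x u 7 = vecHead (vecTail (vecTail (vecTail (vecTail (vecTail (vecTail u)))))) := rfl
@[simp] lemma cons_val_eight {α : Type*} {m : ℕ} (x : α) (u : Fin (m+8) → α) :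
    vecCons x u 8 = vecHead (vecTail (vecTail (vecTail (vecTail (vecTail (vecTail (vecTail u))))))) := rfl

@[simp] lemma finh2s0 : Fin.succ (0 : Fin 2) = 1 := by decide
@[simp] lemma finh2s1 : Fin.succ (1 : Fin 2) = 2 := by decide
@[simp] lemma finh3s0 : Fin.succ (0 : Fin 3) = 1 := by decide
@[simp] lemma finh3s1 : Fin.succ (1 : Fin 3) = 2 := by decide
@[simp] lemma finh3s2 : Fin.succ (2 : Fin 3) = 3 := by decide
@[simp] lemma finh4s0 : Fin.succ (0 : Fin 4) = 1 := by decide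
@[simp] lemma finh4s1 : Fin.succ (1 : Fin 4) = 2 := by decide
@[simp] lemma finh4s2 : Fin.succ (2 : Fin 4) = 3 := by decide
@[simp] lemma finh4s3 : Fin.succ (3 : Fin 4) = 4 := by decide
@[simp] lemma finsa3_0_0 : Fin.succAbove (0 : Fin 3) (0 : Fin 2) = 1 := by decide
@[simp] lemma finsa3_0_1 : Fin.succAbove (0 : Fin 3) (1 : Fin 2) = 2 := by decide
@[simp] lemma finsa3_1_0 : Fin.succAbove (1 : Fin 3) (0 : Fin 2) = 0 := by decide
@[simp] lemma finsa3_1_1 : Fin.succAbove (1 : Fin 3) (1 : Fin 2) = 2 := by decide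
@[simp] lemma finsa3_2_0 : Fin.succAbove (2 : Fin 3) (0 : Fin 2) = 0 := by decide
@[simp] lemma finsa3_2_1 : Fin.succAbove (2 : Fin 3) (1 : Fin 2) = 1 := by decide
@[simp] lemma finsa4_0_0 : Fin.succAbove (0 : Fin 4) (0 : Fin 3) = 1 := by decide
@[simp] lemma finsa4_0_1 : Fin.succAbove (0 : Fin 4) (1 : Fin 3) = 2 := by decide
@[simp] lemma finsa4_0_2 : Fin.succAbove (0 : Fin 4) (2 : Fin 3) = 3 := by decide
@[simp] lemma finsa4_1_0 : Fin.succAbove (1 : Fin 4) (0 : Fin 3) = 0 := by decide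
@[simp] lemma finsa4_1_1 : Fin.succAbove (1 : Fin 4) (1 : Fin 3) = 2 := by decide
@[simp] lemma finsa4_1_2 : Fin.succAbove (1 : Fin 4) (2 : Fin 3) = 3 := by decide
@[simp] lemma finsa4_2_0 : Fin.succAbove (2 : Fin 4) (0 : Fin 3) = 0 := by decide
@[simp] lemma finsa4_2_1 : Fin.succAbove (2 : Fin 4) (1 : Fin 3) = 1 := by decide
@[simp] lemma finsa4_2_2 : Fin.succAbove (2 : Fin 4) (2 : Fin 3) = 3 := by decide
@[simp] lemma finsa4_3_0 : Fin.succAbove (3 : Fin 4) (0 : Fin 3) = 0 := by decide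
@[simp] lemma finsa4_3_1 : Fin.succAbove (3 : Fin 4) (1 : Fin 3) = 1 := by decide
@[simp] lemma finsa4_3_2 : Fin.succAbove (3 : Fin 4) (2 : Fin 3) = 2 := by decide
@[simp] lemma finsa5_0_0 : Fin.succAbove (0 : Fin 5) (0 : Fin 4) = 1 := by decide
@[simp] lemma finsa5_0_1 : Fin.succAbove (0 : Fin 5) (1 : Fin 4) = 2 := by decide
@[simp] lemma finsa5_0_2 : Fin.succAbove (0 : Fin 5) (2 : Fin 4) = 3 := by decide
@[simp] lemma finsa5_0_3 : Fin.succAbove (0 : Fin 5) (3 : Fin 4) = 4 := by decide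
@[simp] lemma finsa5_1_0 : Fin.succAbove (1 : Fin 5) (0 : Fin 4) = 0 := by decide
@[simp] lemma finsa5_1_1 : Fin.succAbove (1 : Fin 5) (1 : Fin 4) = 2 := by decide
@[simp] lemma finsa5_1_2 : Fin.succAbove (1 : Fin 5) (2 : Fin 4) = 3 := by decide
@[simp] lemma finsa5_1_3 : Fin.succAbove (1 : Fin 5) (3 : Fin 4) = 4 := by decide
@[simp] lemma finsa5_2_0 : Fin.succAbove (2 : Fin 5) (0 : Fin 4) = 0 := by decide
@[simp] lemma finsa5_2_1 : Fin.succAbove (2 : Fin 5) (1 : Fin 4) = 1 := by decide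
@[simp] lemma finsa5_2_2 : Fin.succAbove (2 : Fin 5) (2 : Fin 4) = 3 := by decide
@[simp] lemma finsa5_2_3 : Fin.succAbove (2 : Fin 5) (3 : Fin 4) = 4 := by decide
@[simp] lemma finsa5_3_0 : Fin.succAbove (3 : Fin 5) (0 : Fin 4) = 0 := by decide
@[simp] lemma finsa5_3_1 : Fin.succAbove (3 : Fin 5) (1 : Fin 4) = 1 := by decide
@[simp] lemma finsa5_3_2 : Fin.succAbove (3 : Fin 5) (2 : Fin 4) = 2 := by decide
@[simp] lemma finsa5_3_3 : Fin.succAbove (3 : Fin 5) (3 : Fin 4) = 4 := by decide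
@[simp] lemma finsa5_4_0 : Fin.succAbove (4 : Fin 5) (0 : Fin 4) = 0 := by decide
@[simp] lemma finsa5_4_1 : Fin.succAbove (4 : Fin 5) (1 : Fin 4) = 1 := by decide
@[simp] lemma finsa5_4_2 : Fin.succAbove (4 : Fin 5) (2 : Fin 4) = 2 := by decide
@[simp] lemma finsa5_4_3 : Fin.succAbove (4 : Fin 5) (3 : Fin 4) = 3 := by decide

set_option maxHeartbeats 4000000 in
theorem det_fin_four {R : Type*} [CommRing R] (M : Matrix (Fin 4) (Fin 4) R) :
    M.det = M 0 0*M 1 1*M 2 2*M 3 3 - M 0 0*M 1 1*M 2 3*M 3 2 - M 0 0*M 1 2*M 2 1*M 3 3 + M 0 0*M 1 2*M 2 3*M 3 1 + M 0 0*M 1 3*M 2 1*M 3 2 - M 0 0*M 1 3*M 2 2*M 3 1 - M 0 1*M 1 0*M 2 2*M 3 3 + M 0 1*M 1 0*M 2 3*M 3 2 + M 0 1*M 1 2*M 2 0*M 3 3 - M 0 1*M 1 2*M 2 3*M 3 0 - M 0 1*M 1 3*M 2 0*M 3 2 + M 0 1*M 1 3*M 2 2*M 3 0 + M 0 2*M 1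 0*M 2 1*M 3 3 - M 0 2*M 1 0*M 2 3*M 3 1 - M 0 2*M 1 1*M 2 0*M 3 3 + M 0 2*M 1 1*M 2 3*M 3 0 + M 0 2*M 1 3*M 2 0*M 3 1 - M 0 2*M 1 3*M 2 1*M 3 0 - M 0 3*M 1 0*M 2 1*M 3 2 + M 0 3*M 1 0*M 2 2*M 3 1 + M 0 3*M 1 1*M 2 0*M 3 2 - M 0 3*M 1 1*M 2 2*M 3 0 - M 0 3*M 1 2*M 2 0*M 3 1 + M 0 3*M 1 2*M 2 1*M 3 0 := by
  norm_num [Matrix.det_succ_row_zero, Fin.sum_univ_succ, Matrix.det_fin_three, Matrix.submatrix_apply]; ring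

set_option maxHeartbeats 4000000 in
theorem det_fin_five {R : Type*} [CommRing R] (M : Matrix (Fin 5) (Fin 5) R) :
    M.det = M 0 0*M 1 1*M 2 2*M 3 3*M 4 4 - M 0 0*M 1 1*M 2 2*M 3 4*M 4 3 - M 0 0*M 1 1*M 2 3*M 3 2*M 4 4 + M 0 0*M 1 1*M 2 3*M 3 4*M 4 2 + M 0 0*M 1 1*M 2 4*M 3 2*M 4 3 - M 0 0*M 1 1*M 2 4*M 3 3*M 4 2 - M 0 0*M 1 2*M 2 1*M 3 3*M 4 4 + M 0 0*M 1 2*M 2 1*M 3 4*M 4 3 + M 0 0*M 1 2*M 2 3*M 3 1*M 4 4 - M 0 0*M 1 2*M 2 3*M 3 4*M 4 1 - M 0 0*M 1 2*M 2 4*M 3 1*M 4 3 + M 0 0*M 1 2*M 2 4*M 3 3*M 4 1 + M 0 0*M 1 3*M 2 1*M 3 2*M 4 4 - M 0 0*M 1 3*M 2 1*M 3 4*M 4 2 - M 0 0*M 1 3*M 2 2*M 3 1*M 4 4 + M 0 0*M 1 3*M 2 2*M 3 4*M 4 1 + M 0 0*M 1 3*M 2 4*M 3 1*M 4 2 - M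 0 0*M 1 3*M 2 4*M 3 2*M 4 1 - M 0 0*M 1 4*M 2 1*M 3 2*M 4 3 + M 0 0*M 1 4*M 2 1*M 3 3*M 4 2 + M 0 0*M 1 4*M 2 2*M 3 1*M 4 3 - M 0 0*M 1 4*M 2 2*M 3 3*M 4 1 - M 0 0*M 1 4*M 2 3*M 3 1*M 4 2 + M 0 0*M 1 4*M 2 3*M 3 2*M 4 1 - M 0 1*M 1 0*M 2 2*M 3 3*M 4 4 + M 0 1*M 1 0*M 2 2*M 3 4*M 4 3 + M 0 1*M 1 0*M 2 3*M 3 2*M 4 4 - M 0 1*M 1 0*M 2 3*M 3 4*M 4 2 - M 0 1*M 1 0*M 2 4*M 3 2*M 4 3 + M 0 1*M 1 0*M 2 4*M 3 3*M 4 2 + M 0 1*M 1 2*M 2 0*M 3 3*M 4 4 - M 0 1*M 1 2*M 2 0*M 3 4*M 4 3 - M 0 1*M 1 2*M 2 3*M 3 0*M 4 4 + M 0 1*M 1 2*M 2 3*M 3 4*M 4 0 + M 0 1*M 1 2*M 2 4*M 3 0*M 4 3 - M 0 1*M 1 2*M 2 4*M 3 3*M 4 0 - M 0 1*M 1 3*M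 2 0*M 3 2*M 4 4 + M 0 1*M 1 3*M 2 0*M 3 4*M 4 2 + M 0 1*M 1 3*M 2 2*M 3 0*M 4 4 - M 0 1*M 1 3*M 2 2*M 3 4*M 4 0 - M 0 1*M 1 3*M 2 4*M 3 0*M 4 2 + M 0 1*M 1 3*M 2 4*M 3 2*M 4 0 + M 0 1*M 1 4*M 2 0*M 3 2*M 4 3 - M 0 1*M 1 4*M 2 0*M 3 3*M 4 2 - M 0 1*M 1 4*M 2 2*M 3 0*M 4 3 + M 0 1*M 1 4*M 2 2*M 3 3*M 4 0 + M 0 1*M 1 4*M 2 3*M 3 0*M 4 2 - M 0 1*M 1 4*M 2 3*M 3 2*M 4 0 + M 0 2*M 1 0*M 2 1*M 3 3*M 4 4 - M 0 2*M 1 0*M 2 1*M 3 4*M 4 3 - M 0 2*M 1 0*M 2 3*M 3 1*M 4 4 + M 0 2*M 1 0*M 2 3*M 3 4*M 4 1 + M 0 2*M 1 0*M 2 4*M 3 1*M 4 3 - M 0 2*M 1 0*M 2 4*M 3 3*M 4 1 - M 0 2*M 1 1*M 2 0*M 3 3*M 4 4 + M 0 2*M 1 1*M 2 0*M 3 4*M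 4 3 + M 0 2*M 1 1*M 2 3*M 3 0*M 4 4 - M 0 2*M 1 1*M 2 3*M 3 4*M 4 0 - M 0 2*M 1 1*M 2 4*M 3 0*M 4 3 + M 0 2*M 1 1*M 2 4*M 3 3*M 4 0 + M 0 2*M 1 3*M 2 0*M 3 1*M 4 4 - M 0 2*M 1 3*M 2 0*M 3 4*M 4 1 - M 0 2*M 1 3*M 2 1*M 3 0*M 4 4 + M 0 2*M 1 3*M 2 1*M 3 4*M 4 0 + M 0 2*M 1 3*M 2 4*M 3 0*M 4 1 - M 0 2*M 1 3*M 2 4*M 3 1*M 4 0 - M 0 2*M 1 4*M 2 0*M 3 1*M 4 3 + M 0 2*M 1 4*M 2 0*M 3 3*M 4 1 + M 0 2*M 1 4*M 2 1*M 3 0*M 4 3 - M 0 2*M 1 4*M 2 1*M 3 3*M 4 0 - M 0 2*M 1 4*M 2 3*M 3 0*M 4 1 + M 0 2*M 1 4*M 2 3*M 3 1*M 4 0 - M 0 3*M 1 0*M 2 1*M 3 2*M 4 4 + M 0 3*M 1 0*M 2 1*M 3 4*M 4 2 + M 0 3*M 1 0*M 2 2*M 3 1*M 4 4 - M 0 3*M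 1 0*M 2 2*M 3 4*M 4 1 - M 0 3*M 1 0*M 2 4*M 3 1*M 4 2 + M 0 3*M 1 0*M 2 4*M 3 2*M 4 1 + M 0 3*M 1 1*M 2 0*M 3 2*M 4 4 - M 0 3*M 1 1*M 2 0*M 3 4*M 4 2 - M 0 3*M 1 1*M 2 2*M 3 0*M 4 4 + M 0 3*M 1 1*M 2 2*M 3 4*M 4 0 + M 0 3*M 1 1*M 2 4*M 3 0*M 4 2 - M 0 3*M 1 1*M 2 4*M 3 2*M 4 0 - M 0 3*M 1 2*M 2 0*M 3 1*M 4 4 + M 0 3*M 1 2*M 2 0*M 3 4*M 4 1 + M 0 3*M 1 2*M 2 1*M 3 0*M 4 4 - M 0 3*M 1 2*M 2 1*M 3 4*M 4 0 - M 0 3*M 1 2*M 2 4*M 3 0*M 4 1 + M 0 3*M 1 2*M 2 4*M 3 1*M 4 0 + M 0 3*M 1 4*M 2 0*M 3 1*M 4 2 - M 0 3*M 1 4*M 2 0*M 3 2*M 4 1 - M 0 3*M 1 4*M 2 1*M 3 0*M 4 2 + M 0 3*M 1 4*M 2 1*M 3 2*M 4 0 + M 0 3*M 1 4*M 2 2*M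 3 0*M 4 1 - M 0 3*M 1 4*M 2 2*M 3 1*M 4 0 + M 0 4*M 1 0*M 2 1*M 3 2*M 4 3 - M 0 4*M 1 0*M 2 1*M 3 3*M 4 2 - M 0 4*M 1 0*M 2 2*M 3 1*M 4 3 + M 0 4*M 1 0*M 2 2*M 3 3*M 4 1 + M 0 4*M 1 0*M 2 3*M 3 1*M 4 2 - M 0 4*M 1 0*M 2 3*M 3 2*M 4 1 - M 0 4*M 1 1*M 2 0*M 3 2*M 4 3 + M 0 4*M 1 1*M 2 0*M 3 3*M 4 2 + M 0 4*M 1 1*M 2 2*M 3 0*M 4 3 - M 0 4*M 1 1*M 2 2*M 3 3*M 4 0 - M 0 4*M 1 1*M 2 3*M 3 0*M 4 2 + M 0 4*M 1 1*M 2 3*M 3 2*M 4 0 + M 0 4*M 1 2*M 2 0*M 3 1*M 4 3 - M 0 4*M 1 2*M 2 0*M 3 3*M 4 1 - M 0 4*M 1 2*M 2 1*M 3 0*M 4 3 + M 0 4*M 1 2*M 2 1*M 3 3*M 4 0 + M 0 4*M 1 2*M 2 3*M 3 0*M 4 1 - M 0 4*M 1 2*M 2 3*M 3 1*M 4 0 -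 M 0 4*M 1 3*M 2 0*M 3 1*M 4 2 + M 0 4*M 1 3*M 2 0*M 3 2*M 4 1 + M 0 4*M 1 3*M 2 1*M 3 0*M 4 2 - M 0 4*M 1 3*M 2 1*M 3 2*M 4 0 - M 0 4*M 1 3*M 2 2*M 3 0*M 4 1 + M 0 4*M 1 3*M 2 2*M 3 1*M 4 0 := by
  norm_num [Matrix.det_succ_row_zero, Fin.sum_univ_succ, det_fin_four, Matrix.submatrix_apply]; ring


section Defs

/-- the four columns of `Lmat` corresponding to `S₃`, generically -/
def vc5 {R : Type*} [CommRing R] (a b : R) : Fin 5 → R := ![-3*a^2, 0, 3*a, 0, 0]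
def vc6 {R : Type*} [CommRing R] (a b : R) : Fin 5 → R := ![-2*a*b, -a^2, b, 2*a, 0]
def vc7 {R : Type*} [CommRing R] (a b : R) : Fin 5 → R := ![-b^2, -2*a*b, 0, 2*b, a]
def vc8 {R : Type*} [CommRing R] (a b : R) : Fin 5 → R := ![0, -3*b^2, 0, 0, 3*b]

def Dm {R : Type*} [CommRing R] (u v f g h : Fin 5 → R) : Matrix (Fin 5) (Fin 5) R :=
  Matrix.of ![u, v, f, g, h]

def E0 : Fin 5 → ℝ := ![1,0,0,0,0]
def E1 : Fin 5 → ℝ := ![0,1,0,0,0]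
def E2 : Fin 5 → ℝ := ![0,0,1,0,0]
def E3 : Fin 5 → ℝ := ![0,0,0,1,0]
def E4 : Fin 5 → ℝ := ![0,0,0,0,1]

open MvPolynomial in
noncomputable def PP (f g h : Fin 5 → ℝ) : MvPolynomial (Fin 2) ℝ :=
    (Dm (vc5 (X 0) (X 1)) (vc6 (X 0) (X 1)) (fun i => C (f i)) (fun i => C (g i)) (fun i => C (h i))).det ^ 2
  + (Dm (vc5 (X 0) (X 1)) (vc8 (X 0) (X 1)) (fun i => C (f i)) (fun i => C (g i)) (fun i => C (h i))).det ^ 2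
  + (Dm (vc7 (X 0) (X 1)) (vc8 (X 0) (X 1)) (fun i => C (f i)) (fun i => C (g i)) (fun i => C (h i))).det ^ 2

end Defs

lemma Dm_map {R S : Type*} [CommRing R] [CommRing S] (φ : R →+* S) (u v f g h : Fin 5 → R) :
    (Dm u v f g h).map φ = Dm (φ ∘ u) (φ ∘ v) (φ ∘ f) (φ ∘ g) (φ ∘ h) := by
  ext i j
  fin_cases i <;> simp [Dm]

lemma vc5_map {R S : Type*} [CommRing R] [CommRing S] (φ : R →+* S) (a b : R) :
    φ ∘ vc5 a b = vc5 (φ a) (φ b) := by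
  funext i; fin_cases i <;> simp [vc5, map_ofNat]
lemma vc6_map {R S : Type*} [CommRing R] [CommRing S] (φ : R →+* S) (a b : R) :
    φ ∘ vc6 a b = vc6 (φ a) (φ b) := by
  funext i; fin_cases i <;> simp [vc6, map_ofNat]
lemma vc7_map {R S : Type*} [CommRing R] [CommRing S] (φ : R →+* S) (a b : R) :
    φ ∘ vc7 a b = vc7 (φ a) (φ b) := by
  funext i; fin_cases i <;> simp [vc7, map_ofNat]
lemma vc8_map {R S : Type*} [CommRing R] [CommRing S] (φ : R →+* S) (a b : R) :
    φ ∘ vc8 a b = vc8 (φ a) (φ b) := by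
  funext i; fin_cases i <;> simp [vc8, map_ofNat]

open MvPolynomial in
lemma evalPP (f g h : Fin 5 → ℝ) (a b : ℝ) :
    MvPolynomial.eval ![a, b] (PP f g h) =
      (Dm (vc5 a b) (vc6 a b) f g h).det ^ 2
    + (Dm (vc5 a b) (vc8 a b) f g h).det ^ 2
    + (Dm (vc7 a b) (vc8 a b) f g h).det ^ 2 := by
  have hC : ∀ u : Fin 5 → ℝ, (MvPolynomial.eval ![a,b] : MvPolynomial (Fin 2) ℝ →+* ℝ) ∘ (fun i => C (u i)) = u := by
    intro u; funext i; simp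
  have hX0 : MvPolynomial.eval ![a,b] (X 0 : MvPolynomial (Fin 2) ℝ) = a := by simp
  have hX1 : MvPolynomial.eval ![a,b] (X 1 : MvPolynomial (Fin 2) ℝ) = b := by simp
  simp only [PP, map_add, map_pow, RingHom.map_det, Dm_map, vc5_map, vc6_map, vc7_map, vc8_map,
    hC, hX0, hX1, RingHom.mapMatrix_apply]

set_option maxHeartbeats 2000000 in
/-- Expansion of the determinant by multilinearity in the first two rows. -/
theorem det_expand (u v f g h : Fin 5 → ℝ) :
    (Dm u v f g h).det =
      (u 0 * v 1 - u 1 * v 0) * (Dm E0 E1 f g h).det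
    + (u 0 * v 2 - u 2 * v 0) * (Dm E0 E2 f g h).det
    + (u 0 * v 3 - u 3 * v 0) * (Dm E0 E3 f g h).det
    + (u 0 * v 4 - u 4 * v 0) * (Dm E0 E4 f g h).det
    + (u 1 * v 2 - u 2 * v 1) * (Dm E1 E2 f g h).det
    + (u 1 * v 3 - u 3 * v 1) * (Dm E1 E3 f g h).det
    + (u 1 * v 4 - u 4 * v 1) * (Dm E1 E4 f g h).det
    + (u 2 * v 3 - u 3 * v 2) * (Dm E2 E3 f g h).det
    + (u 2 * v 4 - u 4 * v 2) * (Dm E2 E4 f g h).det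
    + (u 3 * v 4 - u 4 * v 3) * (Dm E3 E4 f g h).det := by
  simp only [det_fin_five]
  simp [Dm, E0, E1, E2, E3, E4]
  ring

lemma expand56 (a b : ℝ) (f g h : Fin 5 → ℝ) :
    (Dm (vc5 a b) (vc6 a b) f g h).det =
        3*a^4 * (Dm E0 E1 f g h).det + 3*a^2*b * (Dm E0 E2 f g h).det
      - 6*a^3 * (Dm E0 E3 f g h).det + 3*a^3 * (Dm E1 E2 f g h).det
      + 6*a^2 * (Dm E2 E3 f g h).det := by
  rw [det_expand]
  simp [vc5, vc6]
  ring

lemma expand58 (a b : ℝ) (f g h : Fin 5 → ℝ) :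
    (Dm (vc5 a b) (vc8 a b) f g h).det =
        9*a^2*b^2 * (Dm E0 E1 f g h).det - 9*a^2*b * (Dm E0 E4 f g h).det
      + 9*a*b^2 * (Dm E1 E2 f g h).det + 9*a*b * (Dm E2 E4 f g h).det := by
  rw [det_expand]
  simp [vc5, vc8]
  ring

lemma expand78 (a b : ℝ) (f g h : Fin 5 → ℝ) :
    (Dm (vc7 a b) (vc8 a b) f g h).det =
        3*b^4 * (Dm E0 E1 f g h).det - 3*b^3 * (Dm E0 E4 f g h).det
      + 6*b^3 * (Dm E1 E3 f g h).det - 3*a*b^2 * (Dm E1 E4 f g h).det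
      + 6*b^2 * (Dm E3 E4 f g h).det := by
  rw [det_expand]
  simp [vc7, vc8]
  ring

lemma exists_single_not_mem {n : ℕ} (hn : n < 5) (v : Fin n → (Fin 5 → ℝ)) :
    ∃ k : Fin 5, Pi.single k (1:ℝ) ∉ Submodule.span ℝ (Set.range v) := by
  by_contra hall
  push_neg at hall
  have htop : Submodule.span ℝ (Set.range v) = ⊤ := by
    rw [eq_top_iff, ← (Pi.basisFun ℝ (Fin 5)).span_eq]
    refine Submodule.span_le.mpr ?_
    rintro x ⟨i, rfl⟩
    simpa using hall i
  have h1 : Module.finrank ℝ (Submodule.span ℝ (Set.range v)) ≤ n := by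
    simpa [Set.finrank] using finrank_range_le_card (R := ℝ) v
  rw [htop, finrank_top] at h1
  have h2 : Module.finrank ℝ (Fin 5 → ℝ) = 5 := by
    simp [Module.finrank_pi]
  omega

/-- If `f, g, h` are linearly independent, some pair of standard basis vectors completes
them to a basis, hence some `c_{kl}` determinant is nonzero. -/
lemma exists_c_ne_zero (f g h : Fin 5 → ℝ) (hind : LinearIndependent ℝ ![f, g, h]) :
    ∃ k l : Fin 5, (Dm (Pi.single l 1) (Pi.single k 1) f g h).det ≠ 0 := by
  obtain ⟨k, hk⟩ := exists_single_not_mem (by norm_num) ![f, g, h]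
  have hind4 : LinearIndependent ℝ (Fin.cons (Pi.single k 1) ![f, g, h]) :=
    linearIndependent_fin_cons.mpr ⟨hind, hk⟩
  obtain ⟨l, hl⟩ := exists_single_not_mem (by norm_num) (Fin.cons (Pi.single k 1) ![f, g, h])
  have hind5 : LinearIndependent ℝ (Fin.cons (Pi.single l 1) (Fin.cons (Pi.single k 1) ![f, g, h])) :=
    linearIndependent_fin_cons.mpr ⟨hind4, hl⟩
  refine ⟨k, l, ?_⟩
  have hrows : (fun i => (Dm (Pi.single l 1) (Pi.single k 1) f g h) i)
      = Fin.cons (Pi.single l 1) (Fin.cons (Pi.single k 1) ![f, g, h]) := rfl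
  have hunit : IsUnit (Dm (Pi.single l 1) (Pi.single k 1) f g h) := by
    rw [← Matrix.linearIndependent_rows_iff_isUnit]
    exact hind5
  rw [Matrix.isUnit_iff_isUnit_det, isUnit_iff_ne_zero] at hunit
  exact hunit

lemma col5_eq (a b : ℝ) : Lmap a b (Pi.single 5 1) = vc5 a b := by
  funext i
  fin_cases i <;> norm_num [Lmap, Lmat, vc5, Matrix.mulVecLin_apply]
lemma col6_eq (a b : ℝ) : Lmap a b (Pi.single 6 1) = vc6 a b := by
  funext i
  fin_cases i <;> norm_num [Lmap, Lmat, vc6, Matrix.mulVecLin_apply]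
lemma col7_eq (a b : ℝ) : Lmap a b (Pi.single 7 1) = vc7 a b := by
  funext i
  fin_cases i <;> norm_num [Lmap, Lmat, vc7, Matrix.mulVecLin_apply]
lemma col8_eq (a b : ℝ) : Lmap a b (Pi.single 8 1) = vc8 a b := by
  funext i
  fin_cases i <;> norm_num [Lmap, Lmat, vc8, Matrix.mulVecLin_apply]

lemma span_eq_top_of_det (a b : ℝ) (f g h u v : Fin 5 → ℝ)
    (hu : u ∈ Submodule.map (Lmap a b) S₃) (hv : v ∈ Submodule.map (Lmap a b) S₃)
    (hdet : (Dm u v f g h).det ≠ 0) :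
    Submodule.map (Lmap a b) S₃ ⊔ Submodule.span ℝ {f, g, h} = ⊤ := by
  have hIsUnit : IsUnit (Dm u v f g h) :=
    (Matrix.isUnit_iff_isUnit_det _).mpr (isUnit_iff_ne_zero.mpr hdet)
  have hsurj : Function.Surjective (Dm u v f g h).vecMul :=
    vecMul_surjective_iff_isUnit.mpr hIsUnit
  have hspan : Submodule.span ℝ (Set.range (Dm u v f g h)) = ⊤ := by
    change Submodule.span ℝ (Set.range (Dm u v f g h).row) = ⊤
    rw [← range_vecMulLinear, LinearMap.range_eq_top]
    exact hsurj
  rw [eq_top_iff, ← hspan]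
  refine Submodule.span_le.mpr ?_
  rintro x ⟨i, rfl⟩
  fin_cases i
  · exact Submodule.mem_sup_left hu
  · exact Submodule.mem_sup_left hv
  · exact Submodule.mem_sup_right (Submodule.subset_span (Or.inl rfl))
  · exact Submodule.mem_sup_right (Submodule.subset_span (Or.inr (Or.inl rfl)))
  · exact Submodule.mem_sup_right (Submodule.subset_span (Or.inr (Or.inr rfl)))

theorem stmt2 (f g h : Fin 5 → ℝ) (hind : LinearIndependent ℝ ![f, g, h]) :
    ∃ P : MvPolynomial (Fin 2) ℝ, P ≠ 0 ∧ ∀ a b : ℝ,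
      MvPolynomial.eval ![a, b] P ≠ 0 →
      Module.finrank ℝ ↥(Submodule.map (Lmap a b) S₃ ⊔ Submodule.span ℝ {f, g, h}) = 5 := by
  refine ⟨PP f g h, ?_, ?_⟩
  · -- the polynomial is nonzero
    intro hP0
    have hz : ∀ a b : ℝ,
        (Dm (vc5 a b) (vc6 a b) f g h).det = 0 ∧
        (Dm (vc5 a b) (vc8 a b) f g h).det = 0 ∧
        (Dm (vc7 a b) (vc8 a b) f g h).det = 0 := by
      intro a b
      have hev : MvPolynomial.eval ![a, b] (PP f g h) = 0 := by rw [hP0]; simp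
      rw [evalPP] at hev
      refine ⟨?_, ?_, ?_⟩ <;>
        [skip; skip; skip] <;>
        nlinarith [sq_nonneg ((Dm (vc5 a b) (vc6 a b) f g h).det),
          sq_nonneg ((Dm (vc5 a b) (vc8 a b) f g h).det),
          sq_nonneg ((Dm (vc7 a b) (vc8 a b) f g h).det)]
    -- extract the c's
    have t1 := (hz 1 1).2.1; rw [expand58] at t1; norm_num at t1
    have t2 := (hz 1 (-1)).2.1; rw [expand58] at t2; norm_num at t2
    have t3 := (hz (-1) 1).2.1; rw [expand58] at t3; norm_num at t3
    have t4 := (hz (-1) (-1)).2.1; rw [expand58] at t4; norm_num at t4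
    have hc01 : (Dm E0 E1 f g h).det = 0 := by linarith
    have hc04 : (Dm E0 E4 f g h).det = 0 := by linarith
    have hc12 : (Dm E1 E2 f g h).det = 0 := by linarith
    have hc24 : (Dm E2 E4 f g h).det = 0 := by linarith
    have s1 := (hz 1 0).1; rw [expand56] at s1; norm_num at s1
    have s2 := (hz (-1) 0).1; rw [expand56] at s2; norm_num at s2
    have s3 := (hz 1 1).1; rw [expand56] at s3; norm_num at s3
    have hc03 : (Dm E0 E3 f g h).det = 0 := by linarith
    have hc23 : (Dm E2 E3 f g h).det = 0 := by linarith
    have hc02 : (Dm E0 E2 f g h).det = 0 := by linarith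
    have r1 := (hz 1 1).2.2; rw [expand78] at r1; norm_num at r1
    have r2 := (hz (-1) 1).2.2; rw [expand78] at r2; norm_num at r2
    have r3 := (hz 1 (-1)).2.2; rw [expand78] at r3; norm_num at r3
    have hc14 : (Dm E1 E4 f g h).det = 0 := by linarith
    have hc13 : (Dm E1 E3 f g h).det = 0 := by linarith
    have hc34 : (Dm E3 E4 f g h).det = 0 := by linarith
    obtain ⟨k, l, hkl⟩ := exists_c_ne_zero f g h hind
    apply hkl
    rw [det_expand, hc01, hc02, hc03, hc04, hc12, hc13, hc14, hc23, hc24, hc34]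
    ring
  · intro a b hne
    have hm5 : Pi.single (5 : Fin 9) 1 ∈ S₃ := Submodule.subset_span (by simp [S₃])
    have hm6 : Pi.single (6 : Fin 9) 1 ∈ S₃ := Submodule.subset_span (by simp [S₃])
    have hm7 : Pi.single (7 : Fin 9) 1 ∈ S₃ := Submodule.subset_span (by simp [S₃])
    have hm8 : Pi.single (8 : Fin 9) 1 ∈ S₃ := Submodule.subset_span (by simp [S₃])
    have hu5 : vc5 a b ∈ Submodule.map (Lmap a b) S₃ := ⟨_, hm5, col5_eq a b⟩
    have hu6 : vc6 a b ∈ Submodule.map (Lmap a b) S₃ := ⟨_, hm6, col6_eq a b⟩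
    have hu7 : vc7 a b ∈ Submodule.map (Lmap a b) S₃ := ⟨_, hm7, col7_eq a b⟩
    have hu8 : vc8 a b ∈ Submodule.map (Lmap a b) S₃ := ⟨_, hm8, col8_eq a b⟩
    have hone : (Dm (vc5 a b) (vc6 a b) f g h).det ≠ 0 ∨
        (Dm (vc5 a b) (vc8 a b) f g h).det ≠ 0 ∨
        (Dm (vc7 a b) (vc8 a b) f g h).det ≠ 0 := by
      by_contra hcon
      push_neg at hcon
      obtain ⟨h1, h2, h3⟩ := hcon
      apply hne
      rw [evalPP, h1, h2, h3]
      ring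
    have htop : Submodule.map (Lmap a b) S₃ ⊔ Submodule.span ℝ {f, g, h} = ⊤ := by
      rcases hone with h1 | h2 | h3
      · exact span_eq_top_of_det a b f g h _ _ hu5 hu6 h1
      · exact span_eq_top_of_det a b f g h _ _ hu5 hu8 h2
      · exact span_eq_top_of_det a b f g h _ _ hu7 hu8 h3
    rw [htop, finrank_top]
    simp [Module.finrank_pi]
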